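/- arXiv:1908.10665 — 2 statements merged into one kernel-verified Lean document; each statement's English description precedes it below -/
import Mathlib

section
/- Let S be a countable regular semigroup which is homogeneous as a semigroup. If S is non-periodic (i.e. some element of S generates an infinite subsemigroup), then S is completely simple. -/
section SemigroupDefs

variable {S : Type*} [Semigroup S]

/-- Closure of a subset of a semigroup under multiplication. -/
inductive SgClosure (X : Set S) : S → Prop
  | base {x : S} : x ∈ X → SgClosure X x
  | mul {x y : S} : SgClosure X x → SgClosure X y → SgClosure X (x * y)

/-- Closure of a subset of a semigroup under multiplication and under the operation
`x ↦ x'` sending an element of a completely simple semigroup to its inverse in the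
maximal subgroup containing it, characterised by `x·y·x = x`, `y·x·y = y`, `x·y = y·x`. -/
inductive CSgClosure (X : Set S) : S → Prop
  | base {x : S} : x ∈ X → CSgClosure X x
  | mul {x y : S} : CSgClosure X x → CSgClosure X y → CSgClosure X (x * y)
  | inv {x y : S} : CSgClosure X x → x * y * x = x → y * x * y = y → x * y = y * x →
      CSgClosure X y

end SemigroupDefs

/-- A countable semigroup is homogeneous as a semigroup if every isomorphism between
finitely generated subsemigroups extends to an automorphism. -/
def IsHomogeneousSemigroup (S : Type*) [Semigroup S] : Prop :=
  ∀ (X Y : Finset S) (φ : S → S),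
    Set.BijOn φ {s | SgClosure (X : Set S) s} {s | SgClosure (Y : Set S) s} →
    (∀ x y : S, SgClosure (X : Set S) x → SgClosure (X : Set S) y →
      φ (x * y) = φ x * φ y) →
    ∃ Φ : S → S, Function.Bijective Φ ∧ (∀ x y : S, Φ (x * y) = Φ x * Φ y) ∧
      ∀ x : S, SgClosure (X : Set S) x → Φ x = φ x

/-- A countable completely simple semigroup is homogeneous as a completely simple
semigroup if every isomorphism between finitely generated completely simple
subsemigroups (subsemigroups closed under `x ↦ x'`) extends to an automorphism. -/
def IsCSHomogeneousSemigroup (S : Type*) [Semigroup S] : Prop :=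
  ∀ (X Y : Finset S) (φ : S → S),
    Set.BijOn φ {s | CSgClosure (X : Set S) s} {s | CSgClosure (Y : Set S) s} →
    (∀ x y : S, CSgClosure (X : Set S) x → CSgClosure (X : Set S) y →
      φ (x * y) = φ x * φ y) →
    ∃ Φ : S → S, Function.Bijective Φ ∧ (∀ x y : S, Φ (x * y) = Φ x * Φ y) ∧
      ∀ x : S, CSgClosure (X : Set S) x → Φ x = φ x

/-- A semigroup is simple if its only two-sided ideal is the whole semigroup. -/
def IsSimpleSemigroup (S : Type*) [Semigroup S] : Prop :=
  ∀ J : Set S, J.Nonempty → (∀ (s x : S), x ∈ J → s * x ∈ J ∧ x * s ∈ J) → J = Set.univ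

/-- A semigroup is completely simple if it is simple and contains a primitive
idempotent. -/
def IsCompletelySimple (S : Type*) [Semigroup S] : Prop :=
  IsSimpleSemigroup S ∧
    ∃ e : S, e * e = e ∧ ∀ f : S, f * f = f → e * f = f → f * e = f → f = e

section Aux

variable {S : Type*} [Semigroup S]

private def pw (x : S) : ℕ → S
  | 0 => x
  | n + 1 => pw x n * x

@[simp] private lemma pw_zero (x : S) : pw x 0 = x := rfl

private lemma pw_succ (x : S) (n : ℕ) : pw x (n + 1) = pw x n * x := rfl

private lemma pw_add (x : S) (m n : ℕ) : pw x m * pw x n = pw x (m + n + 1) := by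
  induction n with
  | zero => rfl
  | succ n ih =>
      show pw x m * (pw x n * x) = _
      rw [← mul_assoc, ih]
      rfl

private lemma pw_mem_closure {x : S} {X : Set S} (hx : x ∈ X) : ∀ n, SgClosure X (pw x n) := by
  intro n
  induction n with
  | zero => exact SgClosure.base hx
  | succ n ih => exact SgClosure.mul ih (SgClosure.base hx)

private lemma sgClosure_single {x s : S} :
    SgClosure ({x} : Set S) s ↔ ∃ n, s = pw x n := by
  constructor
  · intro h
    induction h with
    | base hm => exact ⟨0, by simpa using hm⟩
    | mul ha hb iha ihb =>
        obtain ⟨m, rfl⟩ := iha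
        obtain ⟨n, rfl⟩ := ihb
        exact ⟨m + n + 1, pw_add x m n⟩
  · rintro ⟨n, rfl⟩
    exact pw_mem_closure (Set.mem_singleton x) n

private lemma pw_inj_of_infinite {x : S}
    (h : {s : S | SgClosure ({x} : Set S) s}.Infinite) :
    Function.Injective (pw x) := by
  have hrange : {s : S | SgClosure ({x} : Set S) s} = Set.range (pw x) := by
    ext s
    simp [sgClosure_single, Set.mem_range, eq_comm]
  rw [hrange] at h
  have key : ∀ i j : ℕ, i < j → pw x i = pw x j → False := by
    intro i j hlt heq
    set p := j - i with hp
    have hppos : 0 < p := by omega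
    have hip : i + p = j := by omega
    have hper : ∀ d, pw x (i + d + p) = pw x (i + d) := by
      intro d
      cases d with
      | zero => simpa [hip] using heq.symm
      | succ d =>
          have h1 : pw x (i + p) * pw x d = pw x (i + (d + 1) + p) :=
            (pw_add x (i + p) d).trans (congrArg (pw x) (by omega))
          have h2 : pw x i * pw x d = pw x (i + (d + 1)) :=
            (pw_add x i d).trans (congrArg (pw x) (by omega))
          calc pw x (i + (d + 1) + p) = pw x (i + p) * pw x d := h1.symm
            _ = pw x i * pw x d := by rw [hip, ← heq]
            _ = pw x (i + (d + 1)) := h2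
    have hbound : ∀ n, ∃ m, m < j ∧ pw x n = pw x m := by
      intro n
      induction n using Nat.strong_induction_on with
      | _ n ih =>
        rcases Nat.lt_or_ge n j with hnj | hnj
        · exact ⟨n, hnj, rfl⟩
        · have hd := hper (n - p - i)
          have he1 : i + (n - p - i) + p = n := by omega
          have he2 : i + (n - p - i) = n - p := by omega
          rw [he1, he2] at hd
          obtain ⟨m, hm, hme⟩ := ih (n - p) (by omega)
          exact ⟨m, hm, by rw [hd, hme]⟩
    have hsub : Set.range (pw x) ⊆ (pw x) '' (Set.Iio j) := by
      rintro s ⟨n, rfl⟩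
      obtain ⟨m, hm, he⟩ := hbound n
      exact ⟨m, hm, he.symm⟩
    exact h ((Set.Finite.image _ (Set.finite_Iio j)).subset hsub)
  intro i j hij
  rcases Nat.lt_trichotomy i j with h1 | h1 | h1
  · exact ((key i j h1 hij).elim)
  · exact h1
  · exact ((key j i h1 hij.symm).elim)

private lemma leftid_pw {x e : S} (he : e * x = x) : ∀ n, e * pw x n = pw x n := by
  intro n
  induction n with
  | zero => simpa using he
  | succ n ih =>
      show e * (pw x n * x) = _
      rw [← mul_assoc, ih]
      rfl

private lemma rightabs_pw {x k : S} (hk : x * k = x) : ∀ n, pw x n * k = pw x n := by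
  intro n
  induction n with
  | zero => simpa using hk
  | succ n ih =>
      show pw x n * x * k = _
      rw [mul_assoc, hk]
      rfl

private lemma sgClosure_tag {x e : S} (hex : e * x = x) (hee : e * e = e) {s : S} :
    SgClosure ({x, e} : Set S) s ↔
      (∃ n, s = pw x n) ∨ s = e ∨ ∃ n, s = pw x n * e := by
  constructor
  · intro h
    induction h with
    | base hm =>
        rcases hm with h | h
        · exact Or.inl ⟨0, by simpa using h⟩
        · exact Or.inr (Or.inl (by simpa using h))
    | mul ha hb iha ihb =>
        rcases iha with ⟨m, rfl⟩ | rfl | ⟨m, rfl⟩ <;>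
          rcases ihb with ⟨n, rfl⟩ | rfl | ⟨n, rfl⟩
        · exact Or.inl ⟨m + n + 1, pw_add x m n⟩
        · exact Or.inr (Or.inr ⟨m, rfl⟩)
        · exact Or.inr (Or.inr ⟨m + n + 1, by rw [← mul_assoc, pw_add]⟩)
        · exact Or.inl ⟨n, leftid_pw hex n⟩
        · exact Or.inr (Or.inl hee)
        · exact Or.inr (Or.inr ⟨n, by rw [← mul_assoc, leftid_pw hex n]⟩)
        · exact Or.inl ⟨m + n + 1, by rw [mul_assoc, leftid_pw hex n, pw_add]⟩
        · exact Or.inr (Or.inr ⟨m, by rw [mul_assoc, hee]⟩)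
        · exact Or.inr (Or.inr ⟨m + n + 1, by
            rw [mul_assoc, ← mul_assoc e, leftid_pw hex n, ← mul_assoc, pw_add]⟩)
  · rintro (⟨n, rfl⟩ | rfl | ⟨n, rfl⟩)
    · exact pw_mem_closure (by simp) n
    · exact SgClosure.base (by simp)
    · exact SgClosure.mul (pw_mem_closure (by simp) n) (SgClosure.base (by simp))

private lemma sgClosure_pairm {Y k : S} (h1 : k * Y = Y) (h2 : Y * k = Y) (hkk : k * k = k)
    {s : S} :
    SgClosure ({Y, k} : Set S) s ↔ (∃ n, s = pw Y n) ∨ s = k := by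
  constructor
  · intro h
    induction h with
    | base hm =>
        rcases hm with h | h
        · exact Or.inl ⟨0, by simpa using h⟩
        · exact Or.inr (by simpa using h)
    | mul ha hb iha ihb =>
        rcases iha with ⟨m, rfl⟩ | rfl <;> rcases ihb with ⟨n, rfl⟩ | rfl
        · exact Or.inl ⟨m + n + 1, pw_add Y m n⟩
        · exact Or.inl ⟨m, rightabs_pw h2 m⟩
        · exact Or.inl ⟨n, leftid_pw h1 n⟩
        · exact Or.inr hkk
  · rintro (⟨n, rfl⟩ | rfl)
    · exact pw_mem_closure (by simp) n
    · exact SgClosure.base (by simp)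

private lemma sgClosure_idem {e : S} (hee : e * e = e) {s : S} :
    SgClosure ({e} : Set S) s ↔ s = e := by
  constructor
  · intro h
    induction h with
    | base hm => simpa using hm
    | mul _ _ iha ihb => rw [iha, ihb, hee]
  · rintro rfl
    exact SgClosure.base rfl

end Aux

/-- A countable regular semigroup which is homogeneous as a semigroup
and non-periodic (some element generates an infinite subsemigroup) is completely
simple. -/
theorem nonperiodic_regular_homogeneous_completely_simple {S : Type*} [Semigroup S]
    [Countable S]
    (hreg : ∀ a : S, ∃ x : S, a * x * a = a)
    (hhom : IsHomogeneousSemigroup S)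
    (hnp : ∃ x : S, {s : S | SgClosure ({x} : Set S) s}.Infinite) :
    IsCompletelySimple S := by
  classical
  obtain ⟨x, hxinf⟩ := hnp
  have hpinj : Function.Injective (pw x) := pw_inj_of_infinite hxinf
  obtain ⟨x', hx'⟩ := hreg x
  set v : S := x' * x * x' with hvdef
  have hxv : x * v = x * x' := by
    rw [hvdef, ← mul_assoc, ← mul_assoc, hx']
  have hxvx : x * v * x = x := by rw [hxv, hx']
  have hsub : x' * x * (x' * x) = x' * x := by
    rw [mul_assoc, ← mul_assoc x, hx']
  have hvx : v * x = x' * x := by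
    rw [hvdef, mul_assoc]
    exact hsub
  have hvxv : v * x * v = v := by
    rw [hvx, hvdef, ← mul_assoc, hsub]
  set e : S := x * v with hedef
  have hex : e * x = x := hxvx
  have hee : e * e = e := by rw [hedef, ← mul_assoc, hxvx]
  -- basic distinctness
  have hne_pow_e : ∀ n, pw x n ≠ e := by
    intro n hcon
    have h1 : pw x (n + n + 1) = pw x n :=
      (pw_add x n n).symm.trans (by rw [hcon, hee, ← hcon])
    have := hpinj h1
    omega
  have hpe_x : ∀ n, (pw x n * e) * x = pw x (n + 1) := by
    intro n
    rw [mul_assoc, hex]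
    rfl
  have hne_pe_e : ∀ n, pw x n * e ≠ e := by
    intro n hcon
    have h1 : pw x (n + 1) = pw x 0 := by
      rw [← hpe_x n, hcon]
      simpa using hex
    have := hpinj h1
    omega
  have hpe_inj : ∀ n m, pw x n * e = pw x m * e → n = m := by
    intro n m hcon
    have h1 : pw x (n + 1) = pw x (m + 1) := by rw [← hpe_x n, ← hpe_x m, hcon]
    have := hpinj h1
    omega
  -- LEMMA A : x = x * x * t for some t
  have lemA : ∃ t : S, x = x * x * t := by
    by_cases hdeg : ∃ N, pw x N * e = pw x N
    · -- degenerate case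
      obtain ⟨N, hN⟩ := hdeg
      have hdall : ∀ m, N ≤ m → pw x m * e = pw x m := by
        intro m hm
        obtain ⟨d, rfl⟩ := Nat.exists_eq_add_of_le hm
        cases d with
        | zero => simpa using hN
        | succ d =>
            have hsplit : pw x d * pw x N = pw x (N + (d + 1)) :=
              (pw_add x d N).trans (congrArg (pw x) (by omega))
            rw [← hsplit, mul_assoc, hN]
      have hstep : ∀ m, N ≤ m → pw x m = pw x (m + 1) * v := by
        intro m hm
        calc pw x m = pw x m * e := (hdall m hm).symm
          _ = pw x m * (x * v) := by rw [← hedef]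
          _ = pw x m * x * v := (mul_assoc _ _ _).symm
          _ = pw x (m + 1) * v := rfl
      have hchain : ∀ k : ℕ, ∃ t0 : S, pw x N = pw x (N + k + 1) * t0 := by
        intro k
        induction k with
        | zero => exact ⟨v, by simpa using hstep N le_rfl⟩
        | succ k ih =>
            obtain ⟨t0, ht0⟩ := ih
            have h2 := hstep (N + k + 1) (by omega)
            refine ⟨v * t0, ?_⟩
            rw [ht0, h2, mul_assoc, show N + (k + 1) + 1 = N + k + 1 + 1 from by omega]
      obtain ⟨t1, ht1⟩ := hchain N
      set Z := pw x N with hZdef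
      have hZsq : Z * Z = pw x (N + N + 1) := pw_add x N N
      have hZeq : Z = Z * Z * t1 := by rw [hZsq]; exact ht1
      have hZpw : ∀ k, pw Z k = pw x ((N + 1) * k + N) := by
        intro k
        induction k with
        | zero => simp [hZdef]
        | succ k ih =>
            show pw Z k * Z = _
            rw [ih, hZdef, pw_add]
            exact congrArg (pw x) (by ring)
      have hZinj : ∀ a b : ℕ, pw Z a = pw Z b → a = b := by
        intro a b hab
        rw [hZpw, hZpw] at hab
        have h1 := hpinj hab
        exact Nat.eq_of_mul_eq_mul_left (Nat.succ_pos N) (Nat.add_right_cancel h1)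
      set φ : S → S := fun s => if h : ∃ k, s = pw Z k then pw x h.choose else s with hφdef
      have hφZ : ∀ k, φ (pw Z k) = pw x k := by
        intro k
        have hpf : ∃ m, pw Z k = pw Z m := ⟨k, rfl⟩
        simp only [hφdef]
        rw [dif_pos hpf]
        exact congrArg (pw x) (hZinj _ _ hpf.choose_spec).symm
      have hsetZ : ∀ s : S, SgClosure ((({Z} : Finset S) : Set S)) s ↔ ∃ k, s = pw Z k := by
        intro s
        rw [show ((({Z} : Finset S) : Set S)) = ({Z} : Set S) by simp]
        exact sgClosure_single
      have hsetx : ∀ s : S, SgClosure ((({x} : Finset S) : Set S)) s ↔ ∃ k, s = pw x k := by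
        intro s
        rw [show ((({x} : Finset S) : Set S)) = ({x} : Set S) by simp]
        exact sgClosure_single
      have hbij : Set.BijOn φ
          {s : S | SgClosure ((({Z} : Finset S) : Set S)) s}
          {s : S | SgClosure ((({x} : Finset S) : Set S)) s} := by
        rw [show {s : S | SgClosure ((({Z} : Finset S) : Set S)) s}
              = {s : S | ∃ k, s = pw Z k} from Set.ext hsetZ,
            show {s : S | SgClosure ((({x} : Finset S) : Set S)) s}
              = {s : S | ∃ k, s = pw x k} from Set.ext hsetx]
        refine ⟨?_, ?_, ?_⟩
        · rintro s ⟨k, rfl⟩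
          exact ⟨k, hφZ k⟩
        · rintro a ⟨k, rfl⟩ b ⟨l, rfl⟩ hab
          rw [hφZ, hφZ] at hab
          rw [hpinj hab]
        · rintro s ⟨k, rfl⟩
          exact ⟨pw Z k, ⟨k, rfl⟩, hφZ k⟩
      have hmulZ : ∀ a b : S, SgClosure ((({Z} : Finset S) : Set S)) a →
          SgClosure ((({Z} : Finset S) : Set S)) b → φ (a * b) = φ a * φ b := by
        intro a b ha hb
        obtain ⟨k, rfl⟩ := (hsetZ a).mp ha
        obtain ⟨l, rfl⟩ := (hsetZ b).mp hb
        rw [pw_add Z k l, hφZ (k + l + 1), hφZ k, hφZ l, pw_add x k l]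
      obtain ⟨Λ, hΛbij, hΛmul, hΛext⟩ := hhom {Z} {x} φ hbij hmulZ
      have hΛZ : Λ Z = x := by
        rw [hΛext Z (SgClosure.base (by simp))]
        exact hφZ 0
      refine ⟨Λ t1, ?_⟩
      calc x = Λ Z := hΛZ.symm
        _ = Λ (Z * Z * t1) := by rw [← hZeq]
        _ = Λ (Z * Z) * Λ t1 := hΛmul _ _
        _ = Λ Z * Λ Z * Λ t1 := by rw [hΛmul]
        _ = x * x * Λ t1 := by rw [hΛZ]
    · -- nondegenerate case
      push_neg at hdeg
      have hcross : ∀ n m, pw x n ≠ pw x m * e := by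
        intro n m hcon
        rcases eq_or_ne n m with rfl | hne
        · exact hdeg n hcon.symm
        · have h1 : pw x (n + 1) = pw x (m + 1) := by
            rw [← hpe_x m, ← hcon]
            rfl
          have := hpinj h1
          omega
      have hex2 : e * (x * x) = x * x := by rw [← mul_assoc, hex]
      have hsq : ∀ n, pw (x * x) n = pw x (2 * n + 1) := by
        intro n
        induction n with
        | zero => rfl
        | succ n ih =>
            show pw (x * x) n * (x * x) = _
            rw [ih, show x * x = pw x 1 from rfl, pw_add]
            exact congrArg (pw x) (by omega)
      set φ : S → S := fun s =>
        if h : ∃ n, s = pw x n then pw x (2 * h.choose + 1)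
        else if h2 : ∃ n, s = pw x n * e then pw x (2 * h2.choose + 1) * e
        else s with hφdef
      have hφP : ∀ n, φ (pw x n) = pw x (2 * n + 1) := by
        intro n
        have hpf : ∃ m, pw x n = pw x m := ⟨n, rfl⟩
        simp only [hφdef]
        rw [dif_pos hpf]
        exact congrArg (fun k => pw x (2 * k + 1)) (hpinj hpf.choose_spec).symm
      have hφE : φ e = e := by
        simp only [hφdef]
        rw [dif_neg (show ¬∃ n, e = pw x n by rintro ⟨n, hn⟩; exact hne_pow_e n hn.symm),
            dif_neg (show ¬∃ n, e = pw x n * e by rintro ⟨n, hn⟩; exact hne_pe_e n hn.symm)]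
      have hφPE : ∀ n, φ (pw x n * e) = pw x (2 * n + 1) * e := by
        intro n
        have hpf : ∃ m, pw x n * e = pw x m * e := ⟨n, rfl⟩
        simp only [hφdef]
        rw [dif_neg (show ¬∃ m, pw x n * e = pw x m by
              rintro ⟨m, hm⟩; exact hcross m n hm.symm),
            dif_pos hpf]
        exact congrArg (fun k => pw x (2 * k + 1) * e) (hpe_inj n _ hpf.choose_spec).symm
      have hset1 : ∀ s : S, SgClosure ((({x, e} : Finset S) : Set S)) s ↔
          (∃ n, s = pw x n) ∨ s = e ∨ ∃ n, s = pw x n * e := by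
        intro s
        rw [show ((({x, e} : Finset S) : Set S)) = ({x, e} : Set S) by simp]
        exact sgClosure_tag hex hee
      have hset2 : ∀ s : S, SgClosure ((({x * x, e} : Finset S) : Set S)) s ↔
          (∃ n, s = pw (x * x) n) ∨ s = e ∨ ∃ n, s = pw (x * x) n * e := by
        intro s
        rw [show ((({x * x, e} : Finset S) : Set S)) = ({x * x, e} : Set S) by simp]
        exact sgClosure_tag hex2 hee
      have hbij : Set.BijOn φ
          {s : S | SgClosure ((({x, e} : Finset S) : Set S)) s}
          {s : S | SgClosure ((({x * x, e} : Finset S) : Set S)) s} := by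
        rw [show {s : S | SgClosure ((({x, e} : Finset S) : Set S)) s}
              = {s : S | (∃ n, s = pw x n) ∨ s = e ∨ ∃ n, s = pw x n * e} from Set.ext hset1,
            show {s : S | SgClosure ((({x * x, e} : Finset S) : Set S)) s}
              = {s : S | (∃ n, s = pw (x * x) n) ∨ s = e ∨ ∃ n, s = pw (x * x) n * e}
              from Set.ext hset2]
        refine ⟨?_, ?_, ?_⟩
        · rintro s (⟨n, rfl⟩ | rfl | ⟨n, rfl⟩)
          · exact Or.inl ⟨n, by rw [hφP n, hsq n]⟩
          · exact Or.inr (Or.inl hφE)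
          · exact Or.inr (Or.inr ⟨n, by rw [hφPE n, hsq n]⟩)
        · rintro a (⟨n, rfl⟩ | rfl | ⟨n, rfl⟩) b (⟨m, rfl⟩ | rfl | ⟨m, rfl⟩) hab
          · rw [hφP n, hφP m] at hab
            have := hpinj hab
            exact congrArg (pw x) (by omega)
          · rw [hφP n, hφE] at hab
            exact absurd hab (hne_pow_e _)
          · rw [hφP n, hφPE m] at hab
            exact absurd hab (hcross _ _)
          · rw [hφP m, hφE] at hab
            exact absurd hab.symm (hne_pow_e _)
          · rfl
          · rw [hφE, hφPE m] at hab
            exact absurd hab.symm (hne_pe_e _)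
          · rw [hφPE n, hφP m] at hab
            exact absurd hab.symm (hcross _ _)
          · rw [hφPE n, hφE] at hab
            exact absurd hab (hne_pe_e _)
          · rw [hφPE n, hφPE m] at hab
            have h1 := hpe_inj _ _ hab
            have h2 : n = m := by omega
            rw [h2]
        · rintro s (⟨n, rfl⟩ | rfl | ⟨n, rfl⟩)
          · exact ⟨pw x n, Or.inl ⟨n, rfl⟩, by rw [hφP n, hsq n]⟩
          · exact ⟨e, Or.inr (Or.inl rfl), hφE⟩
          · exact ⟨pw x n * e, Or.inr (Or.inr ⟨n, rfl⟩), by rw [hφPE n, hsq n]⟩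
      have hmul : ∀ a b : S, SgClosure ((({x, e} : Finset S) : Set S)) a →
          SgClosure ((({x, e} : Finset S) : Set S)) b → φ (a * b) = φ a * φ b := by
        intro a b ha hb
        rcases (hset1 a).mp ha with ⟨n, rfl⟩ | rfl | ⟨n, rfl⟩ <;>
          rcases (hset1 b).mp hb with ⟨m, rfl⟩ | rfl | ⟨m, rfl⟩
        · rw [pw_add x n m, hφP (n + m + 1), hφP n, hφP m, pw_add x (2 * n + 1) (2 * m + 1)]
          exact congrArg (pw x) (by omega)
        · rw [hφPE n, hφP n, hφE]
        · rw [← mul_assoc (pw x n) (pw x m) e, pw_add x n m, hφPE (n + m + 1), hφP n, hφPE m,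
            ← mul_assoc (pw x (2 * n + 1)) (pw x (2 * m + 1)) e,
            pw_add x (2 * n + 1) (2 * m + 1),
            show 2 * (n + m + 1) + 1 = 2 * n + 1 + (2 * m + 1) + 1 from by omega]
        · rw [leftid_pw hex m, hφE, hφP m, leftid_pw hex (2 * m + 1)]
        · rw [hee, hφE]
          exact hee.symm
        · rw [← mul_assoc e (pw x m) e, leftid_pw hex m, hφPE m, hφE,
            ← mul_assoc e (pw x (2 * m + 1)) e, leftid_pw hex (2 * m + 1)]
        · rw [mul_assoc, leftid_pw hex m, pw_add x n m, hφP (n + m + 1), hφPE n, hφP m,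
            mul_assoc, leftid_pw hex (2 * m + 1), pw_add x (2 * n + 1) (2 * m + 1)]
          exact congrArg (pw x) (by omega)
        · rw [mul_assoc, hee, hφPE n, hφE, mul_assoc, hee]
        · rw [mul_assoc (pw x n) e (pw x m * e), ← mul_assoc e (pw x m) e,
            leftid_pw hex m, ← mul_assoc (pw x n) (pw x m) e, pw_add x n m,
            hφPE (n + m + 1), hφPE n, hφPE m,
            mul_assoc (pw x (2 * n + 1)) e (pw x (2 * m + 1) * e),
            ← mul_assoc e (pw x (2 * m + 1)) e, leftid_pw hex (2 * m + 1),
            ← mul_assoc (pw x (2 * n + 1)) (pw x (2 * m + 1)) e,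
            pw_add x (2 * n + 1) (2 * m + 1),
            show 2 * (n + m + 1) + 1 = 2 * n + 1 + (2 * m + 1) + 1 from by omega]
      obtain ⟨Θ, hΘbij, hΘmul, hΘext⟩ := hhom {x, e} {x * x, e} φ hbij hmul
      have hΘx : Θ x = x * x := by
        rw [hΘext x (SgClosure.base (by simp))]
        exact hφP 0
      have hΘe : Θ e = e := by
        rw [hΘext e (SgClosure.base (by simp))]
        exact hφE
      refine ⟨Θ v * x, ?_⟩
      have he2 : e = x * x * Θ v := by
        calc e = Θ e := hΘe.symm
          _ = Θ (x * v) := by rw [← hedef]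
          _ = Θ x * Θ v := hΘmul x v
          _ = x * x * Θ v := by rw [hΘx]
      calc x = e * x := hex.symm
        _ = x * x * Θ v * x := by rw [← he2]
        _ = x * x * (Θ v * x) := mul_assoc _ _ _
  -- LEMMA B
  obtain ⟨t, hxt⟩ := lemA
  set y : S := x * e with hydef
  have hey : e * y = y := by rw [hydef, ← mul_assoc, hex]
  have hye : y * e = y := by rw [hydef, mul_assoc, hee]
  have hypw : ∀ n, pw y n = pw x n * e := by
    intro n
    induction n with
    | zero => rfl
    | succ n ih =>
        show pw y n * y = _
        rw [ih, hydef, mul_assoc, ← mul_assoc e, hex, ← mul_assoc]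
        rfl
  have hyinj : Function.Injective (pw y) := by
    intro a b hab
    rw [hypw, hypw] at hab
    exact hpe_inj a b hab
  have hyx : y * x = x * x := by rw [hydef, mul_assoc, hex]
  obtain ⟨u, heu⟩ : ∃ u, e = y * u := by
    refine ⟨x * (t * v), ?_⟩
    calc e = x * v := hedef
      _ = x * x * t * v := by rw [← hxt]
      _ = y * x * t * v := by rw [hyx]
      _ = y * (x * (t * v)) := by rw [mul_assoc, mul_assoc, mul_assoc]
  -- LEMMA D : primitivity of all idempotents
  have primD : ∀ E f : S, E * E = E → f * f = f → E * f = f → f * E = f → f = E := by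
    intro E f hEE hff hEf hfE
    -- first homogeneity application: transport the pair (y, e) to f
    have hset1 : {s : S | SgClosure ((({e} : Finset S) : Set S)) s} = {s : S | s = e} := by
      ext s
      rw [show ((({e} : Finset S) : Set S)) = ({e} : Set S) by simp]
      exact sgClosure_idem hee
    have hset2 : {s : S | SgClosure ((({f} : Finset S) : Set S)) s} = {s : S | s = f} := by
      ext s
      rw [show ((({f} : Finset S) : Set S)) = ({f} : Set S) by simp]
      exact sgClosure_idem hff
    have hbij1 : Set.BijOn (fun _ => f)
        {s : S | SgClosure ((({e} : Finset S) : Set S)) s}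
        {s : S | SgClosure ((({f} : Finset S) : Set S)) s} := by
      rw [hset1, hset2]
      refine ⟨fun s _ => rfl, fun a ha b hb _ => ha.trans hb.symm, fun s hs => ⟨e, rfl, hs.symm⟩⟩
    have hmul1 : ∀ a b : S, SgClosure ((({e} : Finset S) : Set S)) a →
        SgClosure ((({e} : Finset S) : Set S)) b →
        (fun _ => f) (a * b) = (fun _ => f) a * (fun _ => f) b :=
      fun a b _ _ => hff.symm
    obtain ⟨Λ, hΛbij, hΛmul, hΛext⟩ := hhom {e} {f} (fun _ => f) hbij1 hmul1
    have hΛe : Λ e = f := hΛext e (SgClosure.base (by simp))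
    set Y := Λ y with hYdef
    have hfY : f * Y = Y := by rw [hYdef, ← hΛe, ← hΛmul, hey]
    have hYf : Y * f = Y := by rw [hYdef, ← hΛe, ← hΛmul, hye]
    have hYU : f = Y * Λ u := by rw [hYdef, ← hΛe, ← hΛmul, ← heu]
    have hYpw : ∀ n, pw Y n = Λ (pw y n) := by
      intro n
      induction n with
      | zero => rfl
      | succ n ih =>
          show pw Y n * Y = _
          rw [ih, hYdef, ← hΛmul]
          rfl
    have hYinj : Function.Injective (pw Y) := by
      intro a b hab
      rw [hYpw, hYpw] at hab
      exact hyinj (hΛbij.1 hab)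
    have hEY : E * Y = Y := by
      calc E * Y = E * (f * Y) := by rw [hfY]
        _ = E * f * Y := (mul_assoc E f Y).symm
        _ = f * Y := by rw [hEf]
        _ = Y := hfY
    have hYE : Y * E = Y := by
      calc Y * E = Y * f * E := by rw [hYf]
        _ = Y * (f * E) := mul_assoc Y f E
        _ = Y * f := by rw [hfE]
        _ = Y := hYf
    have hYnef : ∀ n, pw Y n ≠ f := by
      intro n hcon
      have h1 : pw Y (n + n + 1) = pw Y n :=
        (pw_add Y n n).symm.trans (by rw [hcon, hff, ← hcon])
      have := hYinj h1
      omega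
    have hYneE : ∀ n, pw Y n ≠ E := by
      intro n hcon
      have h1 : pw Y (n + n + 1) = pw Y n :=
        (pw_add Y n n).symm.trans (by rw [hcon, hEE, ← hcon])
      have := hYinj h1
      omega
    -- second homogeneity application: the iso ⟨Y, f⟩ ≅ ⟨Y, E⟩ fixing Y and sending f to E
    set ψ : S → S := fun s => if s = f then E else s with hψdef
    have hψP : ∀ n, ψ (pw Y n) = pw Y n := by
      intro n
      rw [hψdef]
      exact if_neg (hYnef n)
    have hψF : ψ f = E := by
      rw [hψdef]
      exact if_pos rfl
    have hset3 : ∀ s : S, SgClosure ((({Y, f} : Finset S) : Set S)) s ↔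
        (∃ n, s = pw Y n) ∨ s = f := by
      intro s
      rw [show ((({Y, f} : Finset S) : Set S)) = ({Y, f} : Set S) by simp]
      exact sgClosure_pairm hfY hYf hff
    have hset4 : ∀ s : S, SgClosure ((({Y, E} : Finset S) : Set S)) s ↔
        (∃ n, s = pw Y n) ∨ s = E := by
      intro s
      rw [show ((({Y, E} : Finset S) : Set S)) = ({Y, E} : Set S) by simp]
      exact sgClosure_pairm hEY hYE hEE
    have hbij2 : Set.BijOn ψ
        {s : S | SgClosure ((({Y, f} : Finset S) : Set S)) s}
        {s : S | SgClosure ((({Y, E} : Finset S) : Set S)) s} := by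
      rw [show {s : S | SgClosure ((({Y, f} : Finset S) : Set S)) s}
            = {s : S | (∃ n, s = pw Y n) ∨ s = f} from Set.ext hset3,
          show {s : S | SgClosure ((({Y, E} : Finset S) : Set S)) s}
            = {s : S | (∃ n, s = pw Y n) ∨ s = E} from Set.ext hset4]
      refine ⟨?_, ?_, ?_⟩
      · rintro s (⟨n, rfl⟩ | rfl)
        · exact Or.inl ⟨n, hψP n⟩
        · exact Or.inr hψF
      · rintro a (⟨n, rfl⟩ | rfl) b (⟨m, rfl⟩ | rfl) hab
        · rw [hψP n, hψP m] at hab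
          rw [hab]
        · rw [hψP n, hψF] at hab
          exact absurd hab (hYneE n)
        · rw [hψP m, hψF] at hab
          exact absurd hab.symm (hYneE m)
        · rfl
      · rintro s (⟨n, rfl⟩ | rfl)
        · exact ⟨pw Y n, Or.inl ⟨n, rfl⟩, hψP n⟩
        · exact ⟨f, Or.inr rfl, hψF⟩
    have hmul2 : ∀ a b : S, SgClosure ((({Y, f} : Finset S) : Set S)) a →
        SgClosure ((({Y, f} : Finset S) : Set S)) b →
        ψ (a * b) = ψ a * ψ b := by
      intro a b ha hb
      rcases (hset3 a).mp ha with ⟨n, rfl⟩ | rfl <;> rcases (hset3 b).mp hb with ⟨m, rfl⟩ | rfl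
      · rw [pw_add Y n m, hψP, hψP, hψP, pw_add Y n m]
      · rw [rightabs_pw hYf n, hψP n, hψF, rightabs_pw hYE n]
      · rw [leftid_pw hfY m, hψP m, hψF, leftid_pw hEY m]
      · rw [hff, hψF, hEE]
    obtain ⟨Φ, hΦbij, hΦmul, hΦext⟩ := hhom {Y, f} {Y, E} ψ hbij2 hmul2
    have hΦY : Φ Y = Y := by
      rw [hΦext Y (SgClosure.base (by simp))]
      exact hψP 0
    have hΦf : Φ f = E := by
      rw [hΦext f (SgClosure.base (by simp))]
      exact hψF
    have hEexp : E = Y * Φ (Λ u) := by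
      calc E = Φ f := hΦf.symm
        _ = Φ (Y * Λ u) := by rw [← hYU]
        _ = Φ Y * Φ (Λ u) := hΦmul _ _
        _ = Y * Φ (Λ u) := by rw [hΦY]
    have hfE2 : f * E = E := by
      calc f * E = f * (Y * Φ (Λ u)) := by rw [← hEexp]
        _ = f * Y * Φ (Λ u) := (mul_assoc _ _ _).symm
        _ = Y * Φ (Λ u) := by rw [hfY]
        _ = E := hEexp.symm
    rw [hfE] at hfE2
    exact hfE2
  -- SIMPLICITY
  have hsimple : IsSimpleSemigroup S := by
    intro J hJne hJid
    obtain ⟨a, haJ⟩ := hJne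
    obtain ⟨a', ha'⟩ := hreg a
    set E := a * a' with hEdef
    have hEJ : E ∈ J := (hJid a' a haJ).2
    have hEE : E * E = E := by rw [hEdef, ← mul_assoc, ha']
    apply Set.eq_univ_of_forall
    intro s
    obtain ⟨s', hs'⟩ := hreg s
    set F := s * s' with hFdef
    have hFF : F * F = F := by rw [hFdef, ← mul_assoc, hs']
    have hFs : F * s = s := hs'
    set c := F * E * F with hcdef
    obtain ⟨c₀, hc₀⟩ := hreg c
    set d := F * c₀ * F with hddef
    have hcF : c * F = c := by rw [hcdef, mul_assoc (F*E) F F, hFF]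
    have hFc : F * c = c := by rw [hcdef, ← mul_assoc F (F*E) F, ← mul_assoc F F E, hFF]
    have hcd : c * d = c * c₀ * F := by
      rw [hddef, ← mul_assoc c (F*c₀) F, ← mul_assoc c F c₀, hcF]
    have hcdc : c * d * c = c := by
      rw [hcd, mul_assoc (c*c₀) F c, hFc, hc₀]
    have hdF : d * F = d := by rw [hddef, mul_assoc (F*c₀) F F, hFF]
    set h := c * d with hhdef
    have hhh : h * h = h := by rw [hhdef, ← mul_assoc (c*d) c d, hcdc]
    have hFh : F * h = h := by rw [hhdef, ← mul_assoc F c d, hFc]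
    have hhF : h * F = h := by rw [hhdef, mul_assoc c d F, hdF]
    have hhFeq : h = F := primD F h hFF hhh hFh hhF
    have hFJ : F ∈ J := by
      have hFexp : F = F * (E * (F * d)) := by
        calc F = h := hhFeq.symm
          _ = F * E * F * d := by rw [hhdef, hcdef]
          _ = F * (E * (F * d)) := by rw [mul_assoc (F*E) F d, mul_assoc F E (F*d)]
      rw [hFexp]
      exact (hJid F _ ((hJid (F * d) E hEJ).2)).1
    have : F * s ∈ J := (hJid s F hFJ).2
    rwa [hFs] at this
  exact ⟨hsimple, e, hee, fun f hf h1 h2 => primD e f hee hf h1 h2⟩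
end

section
/- Let S be a countable regular semigroup which is homogeneous as a semigroup, and suppose the set of idempotents E(S) is finite and nonempty. Then S is completely simple, and moreover S is homogeneous as a completely simple semigroup. -/
section Aux

variable {S : Type*} [Semigroup S]

lemma sg_singleton {e : S} (he : e * e = e) :
    {s | SgClosure ({e} : Set S) s} = {e} := by
  ext s
  constructor
  · intro h
    induction h with
    | base hx => exact hx
    | mul _ _ ih1 ih2 =>
      simp only [Set.mem_singleton_iff] at *
      subst ih1; subst ih2; exact he
  · rintro rfl; exact SgClosure.base rfl

lemma aut_trans (hhom : IsHomogeneousSemigroup S) {e f : S}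
    (he : e * e = e) (hf : f * f = f) :
    ∃ Φ : S → S, Function.Bijective Φ ∧ (∀ x y : S, Φ (x * y) = Φ x * Φ y) ∧ Φ e = f := by
  have hXe : (({e} : Finset S) : Set S) = ({e} : Set S) := by simp
  have hXf : (({f} : Finset S) : Set S) = ({f} : Set S) := by simp
  have hse : {s | SgClosure ((({e} : Finset S)) : Set S) s} = {e} := by
    rw [hXe]; exact sg_singleton he
  have hsf : {s | SgClosure ((({f} : Finset S)) : Set S) s} = {f} := by
    rw [hXf]; exact sg_singleton hf
  obtain ⟨Φ, hb, hm, hext⟩ := hhom {e} {f} (fun _ => f)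
    (by
      rw [hse, hsf]
      refine ⟨fun x hx => rfl, fun x hx y hy _ => ?_, fun y hy => ⟨e, rfl, by simpa using hy.symm⟩⟩
      simp only [Set.mem_singleton_iff] at hx hy; rw [hx, hy])
    (by
      intro x y _ _
      simpa using hf.symm)
  refine ⟨Φ, hb, hm, ?_⟩
  have : Φ e = f := by
    have := hext e (SgClosure.base (by simp))
    simpa using this
  exact this

end Aux
section Aux2

variable {S : Type*} [Semigroup S]

lemma prim_of_hom (hhom : IsHomogeneousSemigroup S)
    (hEfin : {e : S | e * e = e}.Finite) :
    ∀ e f : S, e * e = e → f * f = f → e * f = f → f * e = f → f = e := by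
  intro e f he hf hef hfe
  by_contra hne
  obtain ⟨Φ, hb, hm, hΦe⟩ := aut_trans hhom he hf
  set g : ℕ → S := fun n => Φ^[n] e with hg
  have hg0 : g 0 = e := rfl
  have hgs : ∀ n, g (n + 1) = Φ (g n) := by
    intro n; simp [hg, Function.iterate_succ_apply']
  -- adjacent relations
  have adj : ∀ n, g n * g n = g n ∧ g n * g (n+1) = g (n+1) ∧
      g (n+1) * g n = g (n+1) ∧ g (n+1) ≠ g n := by
    intro n
    induction n with
    | zero =>
      refine ⟨he, ?_, ?_, ?_⟩
      · rw [hg0, hgs, hg0, hΦe]; exact hef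
      · rw [hg0, hgs, hg0, hΦe]; exact hfe
      · rw [hg0, hgs, hg0, hΦe]; exact hne
    | succ n ih =>
      obtain ⟨h1, h2, h3, h4⟩ := ih
      refine ⟨?_, ?_, ?_, ?_⟩
      · have := congrArg Φ h1; rw [hm, ← hgs] at this; exact this
      · have := congrArg Φ h2; rw [hm, ← hgs, ← hgs] at this; exact this
      · have := congrArg Φ h3; rw [hm, ← hgs, ← hgs] at this; exact this
      · intro h
        rw [hgs (n+1), hgs n] at h
        exact h4 (by rw [hgs]; exact hb.1 h)
  -- all pairs
  have pairs : ∀ n m, m < n → g m * g n = g n ∧ g n * g m = g n ∧ g n ≠ g m := by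
    intro n
    induction n with
    | zero => intro m hm; omega
    | succ n ih =>
      intro m hm
      rcases Nat.lt_succ_iff_lt_or_eq.mp hm with hlt | rfl
      · obtain ⟨p1, p2, p3⟩ := ih m hlt
        obtain ⟨a1, a2, a3, a4⟩ := adj n
        refine ⟨?_, ?_, ?_⟩
        · rw [← a2, ← mul_assoc, p1]
        · rw [← a3, mul_assoc, p2]
        · intro hEq
          -- g (n+1) = g m ; a2 : g n * g (n+1) = g (n+1) ⇒ g n * g m = g m
          -- p1 : g m * g n = g n ⇒ with hEq : g (n+1) * g n = g n; but a3 says = g (n+1)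
          have h1 : g n * g m = g m := by rw [← hEq]; exact a2
          -- p2 : g n * g m = g n
          have : g n = g m := by rw [← p2, h1]
          exact p3 this
      · obtain ⟨a1, a2, a3, a4⟩ := adj m
        exact ⟨a2, a3, a4⟩
  have hinj : Function.Injective g := by
    intro m n hmn
    by_contra hne'
    rcases Nat.lt_or_ge m n with h | h
    · exact (pairs n m h).2.2 hmn.symm
    · rcases Nat.lt_or_ge n m with h' | h'
      · exact (pairs m n h').2.2 hmn
      · omega
  have hrange : Set.range g ⊆ {e : S | e * e = e} := by
    rintro _ ⟨n, rfl⟩; exact (adj n).1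
  exact (Set.infinite_range_of_injective hinj) (hEfin.subset hrange)

end Aux2
section Aux3

variable {S : Type*} [Semigroup S]

/-- The two-sided ideal generated by an element. -/
def sIdeal (e : S) : Set S :=
  {z | z = e ∨ (∃ s, z = s * e) ∨ (∃ t, z = e * t) ∨ ∃ s t, z = s * e * t}

lemma sIdeal_self (e : S) : e ∈ sIdeal e := Or.inl rfl

lemma sIdeal_mul_left (e s : S) {x : S} (hx : x ∈ sIdeal e) : s * x ∈ sIdeal e := by
  rcases hx with rfl | ⟨u, rfl⟩ | ⟨t, rfl⟩ | ⟨u, t, rfl⟩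
  · exact Or.inr (Or.inl ⟨s, rfl⟩)
  · exact Or.inr (Or.inl ⟨s * u, (mul_assoc ..).symm⟩)
  · exact Or.inr (Or.inr (Or.inr ⟨s, t, by rw [mul_assoc]⟩))
  · exact Or.inr (Or.inr (Or.inr ⟨s * u, t, by simp [mul_assoc]⟩))

lemma sIdeal_mul_right (e s : S) {x : S} (hx : x ∈ sIdeal e) : x * s ∈ sIdeal e := by
  rcases hx with rfl | ⟨u, rfl⟩ | ⟨t, rfl⟩ | ⟨u, t, rfl⟩
  · exact Or.inr (Or.inr (Or.inl ⟨s, rfl⟩))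
  · exact Or.inr (Or.inr (Or.inr ⟨u, s, rfl⟩))
  · exact Or.inr (Or.inr (Or.inl ⟨t * s, by simp [mul_assoc]⟩))
  · exact Or.inr (Or.inr (Or.inr ⟨u, t * s, by simp [mul_assoc]⟩))

lemma exists_in_all (l : List S) (hl : l ≠ []) : ∃ p : S, ∀ e ∈ l, p ∈ sIdeal e := by
  induction l with
  | nil => exact absurd rfl hl
  | cons a l ih =>
    rcases eq_or_ne l [] with rfl | hl'
    · exact ⟨a, by rintro e he; simp at he; subst he; exact sIdeal_self _⟩
    · obtain ⟨p, hp⟩ := ih hl'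
      refine ⟨a * p, ?_⟩
      intro e he
      rcases List.mem_cons.mp he with rfl | he'
      · exact Or.inr (Or.inr (Or.inl ⟨p, rfl⟩))
      · exact sIdeal_mul_left e a (hp e he')

lemma simple_of (hreg : ∀ a : S, ∃ x : S, a * x * a = a)
    (hhom : IsHomogeneousSemigroup S)
    (hEfin : {e : S | e * e = e}.Finite)
    (hEne : {e : S | e * e = e}.Nonempty) :
    IsSimpleSemigroup S := by
  classical
  set l := hEfin.toFinset.toList with hl
  have hmem : ∀ e : S, e ∈ l ↔ e * e = e := by
    intro e
    rw [hl, Finset.mem_toList, Set.Finite.mem_toFinset]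
    rfl
  have hlne : l ≠ [] := by
    obtain ⟨e, he⟩ := hEne
    intro h
    have := (hmem e).mpr he
    rw [h] at this
    simp at this
  obtain ⟨p, hp⟩ := exists_in_all l hlne
  set K : Set S := {z : S | ∀ e : S, e * e = e → z ∈ sIdeal e} with hK
  have hKne : K.Nonempty := ⟨p, fun e he => hp e ((hmem e).mpr he)⟩
  have hKcl : ∀ s x : S, x ∈ K → s * x ∈ K ∧ x * s ∈ K := by
    intro s x hx
    exact ⟨fun e he => sIdeal_mul_left e s (hx e he),
           fun e he => sIdeal_mul_right e s (hx e he)⟩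
  have hKmin : ∀ J : Set S, J.Nonempty →
      (∀ s x : S, x ∈ J → s * x ∈ J ∧ x * s ∈ J) → K ⊆ J := by
    intro J hJne hJcl
    obtain ⟨a, ha⟩ := hJne
    obtain ⟨x, hx⟩ := hreg a
    have hax : a * x ∈ J := (hJcl x a ha).2
    have he : (a * x) * (a * x) = a * x := by
      rw [← mul_assoc, hx]
    intro z hz
    rcases hz (a * x) he with rfl | ⟨u, rfl⟩ | ⟨t, rfl⟩ | ⟨u, t, rfl⟩
    · exact hax
    · exact (hJcl u (a * x) hax).1
    · exact (hJcl t (a * x) hax).2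
    · exact (hJcl t (u * (a * x)) (hJcl u (a * x) hax).1).2
  -- an idempotent in K
  obtain ⟨a, haK⟩ := hKne
  obtain ⟨x, hx⟩ := hreg a
  have he₀ : (a * x) * (a * x) = a * x := by rw [← mul_assoc, hx]
  have he₀K : a * x ∈ K := (hKcl x a haK).2
  -- all idempotents lie in K
  have hEK : ∀ g : S, g * g = g → g ∈ K := by
    intro g hg
    obtain ⟨Φ, hb, hm, hΦ⟩ := aut_trans hhom he₀ hg
    set K2 : Set S := {z : S | Φ z ∈ K} with hK2
    have hK2ne : K2.Nonempty := by
      obtain ⟨z, hz⟩ := hb.2 p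
      exact ⟨z, by simp only [hK2, Set.mem_setOf_eq, hz]; exact fun e he => hp e ((hmem e).mpr he)⟩
    have hK2cl : ∀ s y : S, y ∈ K2 → s * y ∈ K2 ∧ y * s ∈ K2 := by
      intro s y hy
      constructor
      · show Φ (s * y) ∈ K
        rw [hm]
        exact (hKcl (Φ s) (Φ y) hy).1
      · show Φ (y * s) ∈ K
        rw [hm]
        exact (hKcl (Φ s) (Φ y) hy).2
    have hsub : K ⊆ K2 := hKmin K2 hK2ne hK2cl
    have := hsub he₀K
    rw [hK2, Set.mem_setOf_eq, hΦ] at this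
    exact this
  -- K is everything
  have hKuniv : ∀ b : S, b ∈ K := by
    intro b
    obtain ⟨y, hy⟩ := hreg b
    have hg : (b * y) * (b * y) = b * y := by rw [← mul_assoc, hy]
    have : (b * y) * b ∈ K := (hKcl b (b * y) (hEK _ hg)).2
    rwa [hy] at this
  intro J hJne hJcl
  exact Set.eq_univ_of_univ_subset (fun z _ => hKmin J hJne hJcl (hKuniv z))

end Aux3
section Aux4

variable {S : Type*} [Semigroup S]

lemma SaS (hsimp : IsSimpleSemigroup S) (a b : S) : ∃ s t : S, s * a * t = b := by
  set J : Set S := {z | ∃ s t : S, s * a * t = z} with hJ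
  have hJne : J.Nonempty := ⟨a * a * a, a, a, rfl⟩
  have hJcl : ∀ s x : S, x ∈ J → s * x ∈ J ∧ x * s ∈ J := by
    rintro s x ⟨u, t, rfl⟩
    exact ⟨⟨s * u, t, by simp [mul_assoc]⟩, ⟨u, t * s, by simp [mul_assoc]⟩⟩
  have := hsimp J hJne hJcl
  have : b ∈ J := this ▸ Set.mem_univ b
  exact this

variable (hsimp : IsSimpleSemigroup S)
  (hprim : ∀ e f : S, e * e = e → f * f = f → e * f = f → f * e = f → f = e)

include hsimp hprim in
lemma local_group {e : S} (he : e * e = e) :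
    ∀ a : S, e * a = a → a * e = a →
      ∃ b : S, a * b = e ∧ b * a = e ∧ e * b = b ∧ b * e = b := by
  -- first: right inverses
  have right_inv : ∀ a : S, e * a = a → a * e = a →
      ∃ r : S, a * r = e ∧ e * r = r ∧ r * e = r := by
    intro a hea hae
    obtain ⟨x, y, hxy⟩ := SaS hsimp a e
    set x' := e * x * e with hx'
    set y' := e * y * e with hy'
    have heae : e * a * e = a := by rw [hea, hae]
    have hx'e : x' * e = x' := by rw [hx', mul_assoc, he]
    have hex' : e * x' = x' := by rw [hx', ← mul_assoc, ← mul_assoc, he]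
    have hy'e : y' * e = y' := by rw [hy', mul_assoc, he]
    have hey' : e * y' = y' := by rw [hy', ← mul_assoc, ← mul_assoc, he]
    have hkey : x' * a * y' = e := by
      rw [hx', hy']
      calc e * x * e * a * (e * y * e)
          = e * x * (e * a * e) * y * e := by simp [mul_assoc]
        _ = e * x * a * y * e := by rw [heae]
        _ = e * (x * a * y) * e := by simp [mul_assoc]
        _ = e := by rw [hxy, he, he]
    set f := a * (y' * x') with hf
    have hff : f * f = f := by
      rw [hf]
      calc a * (y' * x') * (a * (y' * x'))
          = a * y' * (x' * a * y') * x' := by simp [mul_assoc]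
        _ = a * y' * e * x' := by rw [hkey]
        _ = a * y' * x' := by rw [mul_assoc, mul_assoc, hex', ← mul_assoc]
        _ = a * (y' * x') := by rw [mul_assoc]
    have hef : e * f = f := by rw [hf, ← mul_assoc, hea]
    have hfe : f * e = f := by
      rw [hf, mul_assoc, mul_assoc, hx'e]
    have hfeq : f = e := hprim e f he hff hef hfe
    refine ⟨y' * x', by rw [← hf, hfeq], ?_, ?_⟩
    · rw [← mul_assoc, hey']
    · rw [mul_assoc, hx'e]
  intro a hea hae
  obtain ⟨r, har, her, hre⟩ := right_inv a hea hae
  obtain ⟨s, hrs, hes, hse⟩ := right_inv r her hre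
  have hra : r * a = e := by
    have h1 : a = a * (r * s) := by rw [hrs, hae]
    calc r * a = r * (a * (r * s)) := by rw [← h1]
      _ = r * (a * r) * s := by simp [mul_assoc]
      _ = r * e * s := by rw [har]
      _ = r * s := by rw [hre]
      _ = e := hrs
  exact ⟨r, har, hra, her, hre⟩

include hsimp hprim in
lemma cinv_exists (hreg : ∀ a : S, ∃ x : S, a * x * a = a) :
    ∀ a : S, ∃ y : S, a * y * a = a ∧ y * a * y = y ∧ a * y = y * a := by
  intro a
  obtain ⟨x, hx⟩ := hreg a
  set e := a * x with hedef
  have he : e * e = e := by rw [hedef, ← mul_assoc, hx]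
  have hea : e * a = a := by rw [hedef, hx]
  set b := a * e with hb
  have heb : e * b = b := by rw [hb, ← mul_assoc, hea]
  have hbe : b * e = b := by rw [hb, mul_assoc, he]
  obtain ⟨c, hbc, hcb, hec, hce⟩ := local_group hsimp hprim he b heb hbe
  have hac : a * c = e := by
    calc a * c = a * (e * c) := by rw [hec]
      _ = b * c := by rw [← mul_assoc, ← hb]
      _ = e := hbc
  set h := c * a with hh
  have hhh : h * h = h := by
    rw [hh]
    calc c * a * (c * a) = c * (a * c) * a := by simp [mul_assoc]
      _ = c * e * a := by rw [hac]
      _ = c * a := by rw [hce]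
  have hah : a * h = a := by
    rw [hh, ← mul_assoc, hac, hea]
  have hha : h * a = a := by
    have h1 : c * (a * e) = e := by rw [← hb]; exact hcb
    have h2 : c * a * e = e := by rw [mul_assoc]; exact h1
    calc h * a = c * a * (e * a) := by rw [hh, hea]
      _ = c * a * e * a := by rw [mul_assoc (c*a)]
      _ = e * a := by rw [h2]
      _ = a := hea
  obtain ⟨d, had, hda, hhd, hdh⟩ := local_group hsimp hprim hhh a hha hah
  refine ⟨d, ?_, ?_, ?_⟩
  · rw [had, hha]
  · rw [hda, hhd]
  · rw [had, hda]

lemma cinv_unique {a y z : S} (h1 : a * y * a = a) (h2 : y * a * y = y) (h3 : a * y = y * a)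
    (h4 : a * z * a = a) (h5 : z * a * z = z) (h6 : a * z = z * a) : y = z := by
  -- e = a*y, f = a*z, show e = f, then y = z
  have hef : a * y = a * z := by
    have e3 : a * y = (a * y) * (a * z) := by
      rw [h3]
      calc y * a = y * (a * z * a) := by rw [h4]
        _ = (y * a) * (z * a) := by simp [mul_assoc]
        _ = (y * a) * (a * z) := by rw [h6]
    have e4 : a * y * (a * z) = a * z := by
      calc a * y * (a * z) = (a * y * a) * z := by simp [mul_assoc]
        _ = a * z := by rw [h1]
    calc a * y = a * y * (a * z) := e3
      _ = a * z := e4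
  calc y = y * (a * y) := by rw [← mul_assoc, h2]
    _ = y * (a * z) := by rw [hef]
    _ = a * y * z := by rw [← mul_assoc, ← h3]
    _ = a * z * z := by rw [hef]
    _ = z * a * z := by rw [h6]
    _ = z := h5

end Aux4
section Aux5

variable {S : Type*} [Semigroup S]
variable (hprim : ∀ e f : S, e * e = e → f * f = f → e * f = f → f * e = f → f = e)
variable (iv : S → S)
variable (hiv1 : ∀ a : S, a * iv a * a = a)
variable (hiv2 : ∀ a : S, iv a * a * iv a = iv a)
variable (hiv3 : ∀ a : S, a * iv a = iv a * a)

include hprim in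
lemma idem_swap {e f : S} (he : e * e = e) (hf : f * f = f) (h : e * f = f) :
    f * e = e := by
  have hg : (f * e) * (f * e) = f * e := by
    calc (f * e) * (f * e) = f * (e * f) * e := by simp [mul_assoc]
      _ = f * f * e := by rw [h]
      _ = f * e := by rw [hf]
  have h1 : e * (f * e) = f * e := by rw [← mul_assoc, h]
  have h2 : (f * e) * e = f * e := by rw [mul_assoc, he]
  exact hprim e (f * e) he hg h1 h2

include hprim in
lemma idem_swap' {e f : S} (he : e * e = e) (hf : f * f = f) (h : f * e = f) :
    e * f = e := by
  have hg : (e * f) * (e * f) = e * f := by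
    calc (e * f) * (e * f) = e * ((f * e) * f) := by simp [mul_assoc]
      _ = e * (f * f) := by rw [h]
      _ = e * f := by rw [hf]
  have h1 : e * (e * f) = e * f := by rw [← mul_assoc, he]
  have h2 : (e * f) * e = e * f := by rw [mul_assoc, h]
  exact hprim e (e * f) he hg h1 h2

include hiv2 in
lemma nn_idem (a : S) : (a * iv a) * (a * iv a) = a * iv a := by
  calc (a * iv a) * (a * iv a) = a * (iv a * a * iv a) := by simp [mul_assoc]
    _ = a * iv a := by rw [hiv2]

include hiv1 hiv3 in
lemma mul_nn (a : S) : a * (a * iv a) = a := by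
  rw [hiv3, ← mul_assoc, hiv1]

include hprim hiv2 hiv3 in
lemma row_facts {e f : S} (he : e * e = e) (hf : f * f = f) :
    e * ((e * f) * iv (e * f)) = (e * f) * iv (e * f) ∧
    ((e * f) * iv (e * f)) * e = e ∧
    ((e * f) * iv (e * f)) * f = (e * f) * iv (e * f) ∧
    f * ((e * f) * iv (e * f)) = f := by
  set z := e * f with hz
  have hε : (z * iv z) * (z * iv z) = z * iv z := nn_idem iv hiv2 z
  have hez : e * z = z := by rw [hz, ← mul_assoc, he]
  have f1 : e * (z * iv z) = z * iv z := by rw [← mul_assoc, hez]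
  have f2 : (z * iv z) * e = e := idem_swap hprim he hε f1
  have hzf : z * f = z := by rw [hz, mul_assoc, hf]
  have f3 : (z * iv z) * f = z * iv z := by
    calc (z * iv z) * f = (iv z * z) * f := by rw [← hiv3]
      _ = iv z * (z * f) := by rw [mul_assoc]
      _ = iv z * z := by rw [hzf]
      _ = z * iv z := (hiv3 z).symm
  have f4 : f * (z * iv z) = f := idem_swap' hprim hf hε f3
  exact ⟨f1, f2, f3, f4⟩

include hprim hiv1 hiv2 hiv3 in
lemma key_ident (u v : S) (ε ε₂ : S)
    (hε : ε = ((u * iv u) * (v * iv v)) * iv ((u * iv u) * (v * iv v)))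
    (hε₂ : ε₂ = ((v * iv v) * (u * iv u)) * iv ((v * iv v) * (u * iv u))) :
    iv (u * v) = ε * iv v * ε₂ * iv u * ε := by
  have hnnu : (u * iv u) * (u * iv u) = u * iv u := nn_idem iv hiv2 u
  have hnnv : (v * iv v) * (v * iv v) = v * iv v := nn_idem iv hiv2 v
  obtain ⟨f1, f2, f3, f4⟩ := row_facts hprim iv hiv2 hiv3 hnnu hnnv
  obtain ⟨g1, g2, g3, g4⟩ := row_facts hprim iv hiv2 hiv3 hnnv hnnu
  rw [← hε] at f1 f2 f3 f4
  rw [← hε₂] at g1 g2 g3 g4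
  -- f1 : nn u * ε = ε ; f2 : ε * nn u = nn u ; f3 : ε * nn v = ε ; f4 : nn v * ε = nn v
  -- g1 : nn v * ε₂ = ε₂ ; g2 : ε₂ * nn v = nn v ; g3 : ε₂ * nn u = ε₂ ; g4 : nn u * ε₂ = nn u
  have hεid : ε * ε = ε := by rw [hε]; exact nn_idem iv hiv2 _
  have A1 : v * ε = v := by
    calc v * ε = (v * (v * iv v)) * ε := by rw [mul_nn iv hiv1 hiv3]
      _ = v * ((v * iv v) * ε) := by rw [mul_assoc]
      _ = v * (v * iv v) := by rw [f4]
      _ = v := mul_nn iv hiv1 hiv3 v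
  have A2 : ε * u = u := by
    calc ε * u = ε * ((u * iv u) * u) := by rw [hiv1]
      _ = (ε * (u * iv u)) * u := by rw [← mul_assoc]
      _ = (u * iv u) * u := by rw [f2]
      _ = u := hiv1 u
  have A3 : u * ε₂ = u := by
    calc u * ε₂ = (u * (u * iv u)) * ε₂ := by rw [mul_nn iv hiv1 hiv3]
      _ = u * ((u * iv u) * ε₂) := by rw [mul_assoc]
      _ = u * (u * iv u) := by rw [g4]
      _ = u := mul_nn iv hiv1 hiv3 u
  have A4 : ε₂ * v = v := by
    calc ε₂ * v = ε₂ * ((v * iv v) * v) := by rw [hiv1]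
      _ = (ε₂ * (v * iv v)) * v := by rw [← mul_assoc]
      _ = (v * iv v) * v := by rw [g2]
      _ = v := hiv1 v
  have V1 : u * v * (ε * iv v * ε₂ * iv u * ε) = ε := by
    have hn : u * v * (ε * iv v * ε₂ * iv u * ε) =
        ((((u * v * ε) * iv v) * ε₂) * iv u) * ε := by simp only [mul_assoc]
    rw [hn, show u * v * ε = u * v from by rw [mul_assoc, A1]]
    rw [mul_assoc u v (iv v)]
    rw [show u * (v * iv v) * ε₂ = u * ε₂ from by rw [mul_assoc, g1]]
    rw [A3, f1]
  have V2 : (ε * iv v * ε₂ * iv u * ε) * (u * v) = ε := by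
    have hn : (ε * iv v * ε₂ * iv u * ε) * (u * v) =
        ((((ε * iv v) * ε₂) * iv u) * (ε * u)) * v := by simp only [mul_assoc]
    rw [hn, A2]
    rw [show ((ε * iv v) * ε₂) * iv u * u = (ε * iv v) * ε₂ from by
      rw [mul_assoc, ← hiv3, mul_assoc (ε * iv v) ε₂ (u * iv u), g3]]
    rw [mul_assoc (ε * iv v) ε₂ v, A4, mul_assoc ε (iv v) v, ← hiv3, f3]
  have h4 : u * v * (ε * iv v * ε₂ * iv u * ε) * (u * v) = u * v := by
    rw [V1, ← mul_assoc, A2]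
  have h5 : (ε * iv v * ε₂ * iv u * ε) * (u * v) * (ε * iv v * ε₂ * iv u * ε) =
      ε * iv v * ε₂ * iv u * ε := by
    rw [V2]
    have hn : ε * (ε * iv v * ε₂ * iv u * ε) = (((ε * ε) * iv v * ε₂) * iv u) * ε := by
      simp only [mul_assoc]
    rw [hn, hεid]
  have h6 : u * v * (ε * iv v * ε₂ * iv u * ε) = (ε * iv v * ε₂ * iv u * ε) * (u * v) := by
    rw [V1, V2]
  exact cinv_unique (hiv1 (u * v)) (hiv2 (u * v)) (hiv3 (u * v)) h4 h5 h6

end Aux5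
section Aux6

variable {S : Type*} [Semigroup S]
variable (hprim : ∀ e f : S, e * e = e → f * f = f → e * f = f → f * e = f → f = e)
variable (iv : S → S)
variable (hiv1 : ∀ a : S, a * iv a * a = a)
variable (hiv2 : ∀ a : S, iv a * a * iv a = iv a)
variable (hiv3 : ∀ a : S, a * iv a = iv a * a)

include hiv1 hiv2 hiv3 in
lemma iv_idem {e : S} (he : e * e = e) : iv e = e :=
  cinv_unique (hiv1 e) (hiv2 e) (hiv3 e) (by rw [he, he]) (by rw [he, he]) rfl

include hiv1 hiv2 hiv3 in
lemma iv_iv (a : S) : iv (iv a) = a :=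
  cinv_unique (hiv1 (iv a)) (hiv2 (iv a)) (hiv3 (iv a)) (hiv2 a) (hiv1 a) (hiv3 a).symm

include hprim hiv1 hiv2 hiv3 in
lemma sg_hat (X : Set S) :
    ∀ s : S, SgClosure (X ∪ iv '' X ∪ {e : S | e * e = e ∧ CSgClosure X e}) s ↔
      CSgClosure X s := by
  set Xh : Set S := X ∪ iv '' X ∪ {e : S | e * e = e ∧ CSgClosure X e} with hXh
  have fwd : ∀ s : S, SgClosure Xh s → CSgClosure X s := by
    intro s h
    induction h with
    | base hx =>
      rcases hx with (hx | ⟨x₀, hx₀, rfl⟩) | hx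
      · exact CSgClosure.base hx
      · exact CSgClosure.inv (CSgClosure.base hx₀) (hiv1 x₀) (hiv2 x₀) (hiv3 x₀)
      · exact hx.2
    | mul _ _ ih1 ih2 => exact CSgClosure.mul ih1 ih2
  have inv_closed : ∀ s : S, SgClosure Xh s → SgClosure Xh (iv s) := by
    intro s h
    induction h with
    | base hx =>
      rcases hx with (hx | ⟨x₀, hx₀, rfl⟩) | hx
      · exact SgClosure.base (Or.inl (Or.inr ⟨_, hx, rfl⟩))
      · rw [iv_iv iv hiv1 hiv2 hiv3]
        exact SgClosure.base (Or.inl (Or.inl hx₀))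
      · rw [iv_idem iv hiv1 hiv2 hiv3 hx.1]
        exact SgClosure.base (Or.inr hx)
    | @mul u v hu hv ihu ihv =>
      have hcu : CSgClosure X u := fwd u hu
      have hcv : CSgClosure X v := fwd v hv
      have hciu : CSgClosure X (iv u) := CSgClosure.inv hcu (hiv1 u) (hiv2 u) (hiv3 u)
      have hciv : CSgClosure X (iv v) := CSgClosure.inv hcv (hiv1 v) (hiv2 v) (hiv3 v)
      have hz : CSgClosure X ((u * iv u) * (v * iv v)) :=
        CSgClosure.mul (CSgClosure.mul hcu hciu) (CSgClosure.mul hcv hciv)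
      have hz' : CSgClosure X (((v * iv v) * (u * iv u))) :=
        CSgClosure.mul (CSgClosure.mul hcv hciv) (CSgClosure.mul hcu hciu)
      have hεmem : (((u * iv u) * (v * iv v)) * iv ((u * iv u) * (v * iv v))) ∈ Xh := by
        refine Or.inr ⟨nn_idem iv hiv2 _, ?_⟩
        exact CSgClosure.mul hz (CSgClosure.inv hz (hiv1 _) (hiv2 _) (hiv3 _))
      have hε₂mem : (((v * iv v) * (u * iv u)) * iv ((v * iv v) * (u * iv u))) ∈ Xh := by
        refine Or.inr ⟨nn_idem iv hiv2 _, ?_⟩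
        exact CSgClosure.mul hz' (CSgClosure.inv hz' (hiv1 _) (hiv2 _) (hiv3 _))
      rw [key_ident hprim iv hiv1 hiv2 hiv3 u v _ _ rfl rfl]
      exact SgClosure.mul (SgClosure.mul (SgClosure.mul
        (SgClosure.mul (SgClosure.base hεmem) ihv) (SgClosure.base hε₂mem)) ihu)
        (SgClosure.base hεmem)
  have bwd : ∀ s : S, CSgClosure X s → SgClosure Xh s := by
    intro s h
    induction h with
    | base hx => exact SgClosure.base (Or.inl (Or.inl hx))
    | mul _ _ ih1 ih2 => exact SgClosure.mul ih1 ih2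
    | @inv x y _ h1 h2 h3 ih =>
      have hy : y = iv x := cinv_unique h1 h2 h3 (hiv1 x) (hiv2 x) (hiv3 x)
      rw [hy]
      exact inv_closed x ih
  exact fun s => ⟨fwd s, bwd s⟩

end Aux6
/-- A countable regular semigroup which is homogeneous as a semigroup
and has a finite nonempty set of idempotents is completely simple, and moreover is
homogeneous as a completely simple semigroup. -/
theorem regular_homogeneous_finite_idempotents {S : Type*} [Semigroup S] [Countable S]
    (hreg : ∀ a : S, ∃ x : S, a * x * a = a)
    (hhom : IsHomogeneousSemigroup S)
    (hEfin : {e : S | e * e = e}.Finite)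
    (hEne : {e : S | e * e = e}.Nonempty) :
    IsCompletelySimple S ∧ IsCSHomogeneousSemigroup S := by
  classical
  have hprim := prim_of_hom hhom hEfin
  have hsimp := simple_of hreg hhom hEfin hEne
  obtain ⟨e₀, he₀⟩ := hEne
  have hcs : IsCompletelySimple S :=
    ⟨hsimp, e₀, he₀, fun f hf h1 h2 => hprim e₀ f he₀ hf h1 h2⟩
  choose iv hiv1 hiv2 hiv3 using cinv_exists hsimp hprim hreg
  refine ⟨hcs, ?_⟩
  intro X Y φ hbij hmul
  have hfin : ∀ Z : Finset S,
      ((Z : Set S) ∪ iv '' (Z : Set S) ∪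
        {e : S | e * e = e ∧ CSgClosure (Z : Set S) e}).Finite :=
    fun Z => (Z.finite_toSet.union (Z.finite_toSet.image iv)).union
      (hEfin.subset (fun e he => he.1))
  have hsetX : {s : S | SgClosure (((hfin X).toFinset : Finset S) : Set S) s} =
      {s : S | CSgClosure (X : Set S) s} := by
    ext s
    rw [Set.mem_setOf_eq, Set.mem_setOf_eq, Set.Finite.coe_toFinset]
    exact sg_hat hprim iv hiv1 hiv2 hiv3 (X : Set S) s
  have hsetY : {s : S | SgClosure (((hfin Y).toFinset : Finset S) : Set S) s} =
      {s : S | CSgClosure (Y : Set S) s} := by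
    ext s
    rw [Set.mem_setOf_eq, Set.mem_setOf_eq, Set.Finite.coe_toFinset]
    exact sg_hat hprim iv hiv1 hiv2 hiv3 (Y : Set S) s
  obtain ⟨Φ, hΦb, hΦm, hΦext⟩ := hhom (hfin X).toFinset (hfin Y).toFinset φ
    (by rw [hsetX, hsetY]; exact hbij)
    (by
      intro x y hx hy
      have hx' : CSgClosure (X : Set S) x := by
        have := Set.ext_iff.mp hsetX x
        exact this.mp hx
      have hy' : CSgClosure (X : Set S) y := by
        have := Set.ext_iff.mp hsetX y
        exact this.mp hy
      exact hmul x y hx' hy')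
  refine ⟨Φ, hΦb, hΦm, ?_⟩
  intro x hx
  exact hΦext x ((Set.ext_iff.mp hsetX x).mpr hx)
end
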